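/- Let C be a class of groups closed under isomorphism that satisfies: (FIN) every finite group is in C; (TREE) whenever a group G acts on a tree (a contractible 1-dimensional G-CW-complex) with all isotropy groups in C, then G ∈ C; and (COL) whenever G is the union of a directed system of subgroups each in C, then G ∈ C. Then C is closed under taking subgroups. -/
import Mathlib


open scoped Pointwise

/-- The smallest class of groups `C₀` satisfying
(FIN) every finite group is in `C₀`;
(TREE) if `G` acts on a tree (by graph automorphisms) with all vertex and edge
isotropy groups in `C₀`, then `G ∈ C₀`;
(COL) if `G` is the union of a directed system of subgroups each belonging to `C₀`,
then `G ∈ C₀`;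
together with closure under isomorphism of groups. -/
inductive InC0 : ∀ (G : Type), [Group G] → Prop where
  | fin (G : Type) [Group G] (h : Finite G) : InC0 G
  | iso (G H : Type) [Group G] [Group H] (e : G ≃* H) (hG : InC0 G) : InC0 H
  | tree (G : Type) [Group G] (V : Type) (T : SimpleGraph V) (htree : T.IsTree)
      [MulAction G V]
      (hadj : ∀ (g : G) (u v : V), T.Adj u v → T.Adj (g • u) (g • v))
      (hvert : ∀ v : V, InC0 (MulAction.stabilizer G v))
      (hedge : ∀ u v : V, T.Adj u v → InC0 (MulAction.stabilizer G ({u, v} : Set V))) :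
      InC0 G
  | col (G : Type) [Group G] (ι : Type) (H : ι → Subgroup G)
      (hdir : Directed (· ≤ ·) H) (hcov : ∀ g : G, ∃ i, g ∈ H i)
      (hmem : ∀ i, InC0 (H i)) : InC0 G


/-- Swap isomorphism between `K.subgroupOf L` and `L.subgroupOf K`. -/
def subgroupOfSwap {G : Type} [Group G] (K L : Subgroup G) :
    (K.subgroupOf L) ≃* (L.subgroupOf K) where
  toFun x := ⟨⟨x.1.1, x.2⟩, x.1.2⟩
  invFun x := ⟨⟨x.1.1, x.2⟩, x.1.2⟩
  left_inv x := rfl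
  right_inv x := rfl
  map_mul' x y := rfl

theorem stab_subgroup_eq {G V : Type} [Group G] [MulAction G V] (H : Subgroup G) (v : V) :
    MulAction.stabilizer (↥H) v = (MulAction.stabilizer G v).subgroupOf H := by
  ext h
  simp [MulAction.mem_stabilizer_iff, Subgroup.mem_subgroupOf, Subgroup.smul_def]

theorem smul_set_coe {G V : Type} [Group G] [MulAction G V] (H : Subgroup G) (h : ↥H)
    (s : Set V) : h • s = (↑h : G) • s := rfl

theorem stab_set_subgroup_eq {G V : Type} [Group G] [MulAction G V] (H : Subgroup G)
    (s : Set V) :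
    MulAction.stabilizer (↥H) s = (MulAction.stabilizer G s).subgroupOf H := by
  ext h
  simp [MulAction.mem_stabilizer_iff, Subgroup.mem_subgroupOf, smul_set_coe]

/-- The smallest class of groups satisfying (FIN), (TREE) and (COL) (and closed under
isomorphism) is closed under taking subgroups. -/
theorem InC0.subgroup_closed (G : Type) [Group G] (hG : InC0 G) (H : Subgroup G) :
    InC0 ↥H := by
  induction hG with
  | fin G h =>
    have : Finite G := h
    exact .fin _ inferInstance
  | iso G G' e hG ih =>
    have h1 := ih (H.comap e.toMonoidHom)
    refine .iso _ _ ?_ h1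
    exact (e.subgroupMap (H.comap e.toMonoidHom)).trans
      (MulEquiv.subgroupCongr
        (Subgroup.map_comap_eq_self_of_surjective (f := (e : G →* G')) e.surjective H))
  | tree G V T htree hadj hvert hedge ihv ihe =>
    refine .tree (↥H) V T htree (fun g u v huv => hadj g u v huv) ?_ ?_
    · intro v
      refine .iso _ _ ((subgroupOfSwap H (MulAction.stabilizer G v)).trans
        (MulEquiv.subgroupCongr (stab_subgroup_eq H v).symm)) ?_
      exact ihv v (H.subgroupOf (MulAction.stabilizer G v))
    · intro u v huv
      refine .iso _ _ ((subgroupOfSwap H (MulAction.stabilizer G ({u,v} : Set V))).trans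
        (MulEquiv.subgroupCongr (stab_set_subgroup_eq H _).symm)) ?_
      exact ihe u v huv (H.subgroupOf (MulAction.stabilizer G ({u,v} : Set V)))
  | col G ι K hdir hcov hmem ih =>
    refine .col (↥H) ι (fun i => (K i).subgroupOf H) ?_ ?_ ?_
    · intro i j
      obtain ⟨k, hik, hjk⟩ := hdir i j
      exact ⟨k, Subgroup.comap_mono hik, Subgroup.comap_mono hjk⟩
    · intro g
      obtain ⟨i, hi⟩ := hcov (g : G)
      exact ⟨i, hi⟩
    · intro i
      exact .iso _ _ (subgroupOfSwap H (K i)) (ih i (H.subgroupOf (K i)))
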